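/- For every integer n ≥ 5, the commutator subgroup SG_n' = [SG_n, SG_n] of the singular braid group SG_n equals the subgroup of SG_n generated by the 2n − 4 elements: α_{0,0,2} = σ_2 σ_1^{−1}, α_{1,0,2} = σ_1 σ_2 σ_1^{−2}, together with, for each j with 3 ≤ j ≤ n−1, the elements α_j = σ_j σ_1^{−1} and β_{0,j} = ρ_j ρ_1^{−1}. -/

import Mathlib

namespace SingBraid

/-- The free-group generator word for `σ_{i+1}` (0-indexed `i`). -/
def σw (n : ℕ) (i : Fin (n-1)) : FreeGroup (Fin (n-1) ⊕ Fin (n-1)) := FreeGroup.of (Sum.inl i)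

/-- The free-group generator word for `ρ_{i+1}` (0-indexed `i`). -/
def ρw (n : ℕ) (i : Fin (n-1)) : FreeGroup (Fin (n-1) ⊕ Fin (n-1)) := FreeGroup.of (Sum.inr i)

/-- Defining relators of the singular braid group `SG_n`. -/
def sgRels (n : ℕ) : Set (FreeGroup (Fin (n-1) ⊕ Fin (n-1))) :=
  {r | ∃ i j : Fin (n-1), ((i:ℕ)+1 < (j:ℕ) ∨ (j:ℕ)+1 < (i:ℕ)) ∧
      r = σw n i * σw n j * (σw n i)⁻¹ * (σw n j)⁻¹} ∪
  {r | ∃ i j : Fin (n-1), (j:ℕ) = (i:ℕ)+1 ∧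
      r = σw n i * σw n j * σw n i * (σw n j * σw n i * σw n j)⁻¹} ∪
  {r | ∃ i j : Fin (n-1), ((i:ℕ)+1 < (j:ℕ) ∨ (j:ℕ)+1 < (i:ℕ)) ∧
      r = ρw n i * ρw n j * (ρw n i)⁻¹ * (ρw n j)⁻¹} ∪
  {r | ∃ i j : Fin (n-1), (j:ℕ) = (i:ℕ)+1 ∧
      r = ρw n i * σw n j * σw n i * (σw n j * σw n i * ρw n j)⁻¹} ∪
  {r | ∃ i j : Fin (n-1), (j:ℕ) = (i:ℕ)+1 ∧
      r = ρw n j * σw n i * σw n j * (σw n i * σw n j * ρw n i)⁻¹} ∪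
  {r | ∃ i j : Fin (n-1), (i = j ∨ (i:ℕ)+1 < (j:ℕ) ∨ (j:ℕ)+1 < (i:ℕ)) ∧
      r = σw n i * ρw n j * (σw n i)⁻¹ * (ρw n j)⁻¹}

/-- The singular braid group `SG_n`, given by the Baez–Birman presentation. -/
abbrev SG (n : ℕ) := PresentedGroup (sgRels n)

/-- The generator `σ_{i+1}` of `SG_n` (0-indexed `i`). -/
def σ (n : ℕ) (i : Fin (n-1)) : SG n := PresentedGroup.of (Sum.inl i)

/-- The generator `ρ_{i+1}` of `SG_n` (0-indexed `i`). -/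
def ρ (n : ℕ) (i : Fin (n-1)) : SG n := PresentedGroup.of (Sum.inr i)

end SingBraid

namespace SGProof
open SingBraid Subgroup
open scoped commutatorElement

section Rels
variable {n : ℕ}

lemma rel_one {r : FreeGroup (Fin (n-1) ⊕ Fin (n-1))} (h : r ∈ sgRels n) :
    PresentedGroup.mk (sgRels n) r = 1 :=
  (QuotientGroup.eq_one_iff r).2 (Subgroup.subset_normalClosure h)

lemma sigma_eq (i : Fin (n-1)) : PresentedGroup.mk (sgRels n) (σw n i) = σ n i := rfl
lemma rho_eq (i : Fin (n-1)) : PresentedGroup.mk (sgRels n) (ρw n i) = ρ n i := rfl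

/-- σᵢσⱼ = σⱼσᵢ for distant i,j. -/
lemma sigma_comm (i j : Fin (n-1)) (h : (i:ℕ)+1 < (j:ℕ) ∨ (j:ℕ)+1 < (i:ℕ)) :
    σ n i * σ n j = σ n j * σ n i := by
  have h1 : PresentedGroup.mk (sgRels n)
      (σw n i * σw n j * (σw n i)⁻¹ * (σw n j)⁻¹) = 1 :=
    rel_one (Or.inl (Or.inl (Or.inl (Or.inl (Or.inl ⟨i, j, h, rfl⟩)))))
  simp only [map_mul, map_inv, sigma_eq, rho_eq] at h1
  calc σ n i * σ n j
      = (σ n i * σ n j * (σ n i)⁻¹ * (σ n j)⁻¹) * (σ n j * σ n i) := by group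
    _ = σ n j * σ n i := by rw [h1]; group

/-- The braid relation. -/
lemma braid_rel (i j : Fin (n-1)) (h : (j:ℕ) = (i:ℕ)+1) :
    σ n i * σ n j * σ n i = σ n j * σ n i * σ n j := by
  have h1 : PresentedGroup.mk (sgRels n)
      (σw n i * σw n j * σw n i * (σw n j * σw n i * σw n j)⁻¹) = 1 :=
    rel_one (Or.inl (Or.inl (Or.inl (Or.inl (Or.inr ⟨i, j, h, rfl⟩)))))
  simp only [map_mul, map_inv, sigma_eq, rho_eq] at h1
  calc σ n i * σ n j * σ n i
      = (σ n i * σ n j * σ n i * (σ n j * σ n i * σ n j)⁻¹) * (σ n j * σ n i * σ n j) := by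
        group
    _ = σ n j * σ n i * σ n j := by rw [h1]; group

/-- ρᵢρⱼ = ρⱼρᵢ for distant i,j. -/
lemma rho_comm (i j : Fin (n-1)) (h : (i:ℕ)+1 < (j:ℕ) ∨ (j:ℕ)+1 < (i:ℕ)) :
    ρ n i * ρ n j = ρ n j * ρ n i := by
  have h1 : PresentedGroup.mk (sgRels n)
      (ρw n i * ρw n j * (ρw n i)⁻¹ * (ρw n j)⁻¹) = 1 :=
    rel_one (Or.inl (Or.inl (Or.inl (Or.inr ⟨i, j, h, rfl⟩))))
  simp only [map_mul, map_inv, sigma_eq, rho_eq] at h1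
  calc ρ n i * ρ n j
      = (ρ n i * ρ n j * (ρ n i)⁻¹ * (ρ n j)⁻¹) * (ρ n j * ρ n i) := by group
    _ = ρ n j * ρ n i := by rw [h1]; group

/-- ρᵢ σᵢ₊₁ σᵢ = σᵢ₊₁ σᵢ ρᵢ₊₁. -/
lemma mix1 (i j : Fin (n-1)) (h : (j:ℕ) = (i:ℕ)+1) :
    ρ n i * σ n j * σ n i = σ n j * σ n i * ρ n j := by
  have h1 : PresentedGroup.mk (sgRels n)
      (ρw n i * σw n j * σw n i * (σw n j * σw n i * ρw n j)⁻¹) = 1 :=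
    rel_one (Or.inl (Or.inl (Or.inr ⟨i, j, h, rfl⟩)))
  simp only [map_mul, map_inv, sigma_eq, rho_eq] at h1
  calc ρ n i * σ n j * σ n i
      = (ρ n i * σ n j * σ n i * (σ n j * σ n i * ρ n j)⁻¹) * (σ n j * σ n i * ρ n j) := by
        group
    _ = σ n j * σ n i * ρ n j := by rw [h1]; group

/-- σᵢ ρⱼ = ρⱼ σᵢ for i = j or distant i, j. -/
lemma sigma_rho_comm (i j : Fin (n-1)) (h : i = j ∨ (i:ℕ)+1 < (j:ℕ) ∨ (j:ℕ)+1 < (i:ℕ)) :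
    σ n i * ρ n j = ρ n j * σ n i := by
  have h1 : PresentedGroup.mk (sgRels n)
      (σw n i * ρw n j * (σw n i)⁻¹ * (ρw n j)⁻¹) = 1 :=
    rel_one (Or.inr ⟨i, j, h, rfl⟩)
  simp only [map_mul, map_inv, sigma_eq, rho_eq] at h1
  calc σ n i * ρ n j
      = (σ n i * ρ n j * (σ n i)⁻¹ * (ρ n j)⁻¹) * (ρ n j * σ n i) := by group
    _ = ρ n j * σ n i := by rw [h1]; group

/-! ### Part 1 : the generators lie in the commutator subgroup. -/

lemma sigma_succ_mem (i : ℕ) (h : i + 1 < n-1) :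
    σ n ⟨i+1, h⟩ * (σ n ⟨i, by omega⟩)⁻¹ ∈ commutator (SG n) := by
  have hb : σ n ⟨i, by omega⟩ * σ n ⟨i+1, h⟩ * σ n ⟨i, by omega⟩
      = σ n ⟨i+1, h⟩ * σ n ⟨i, by omega⟩ * σ n ⟨i+1, h⟩ :=
    braid_rel ⟨i, by omega⟩ ⟨i+1, h⟩ rfl
  have key : σ n ⟨i+1, h⟩ * (σ n ⟨i, by omega⟩)⁻¹
      = ⁅σ n ⟨i, by omega⟩ * σ n ⟨i+1, h⟩, σ n ⟨i, by omega⟩⁆ := by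
    rw [commutatorElement_def]
    symm
    calc (σ n ⟨i, by omega⟩ * σ n ⟨i+1, h⟩) * σ n ⟨i, by omega⟩ *
          (σ n ⟨i, by omega⟩ * σ n ⟨i+1, h⟩)⁻¹ * (σ n ⟨i, by omega⟩)⁻¹
        = (σ n ⟨i, by omega⟩ * σ n ⟨i+1, h⟩ * σ n ⟨i, by omega⟩) *
          ((σ n ⟨i+1, h⟩)⁻¹ * (σ n ⟨i, by omega⟩)⁻¹ * (σ n ⟨i, by omega⟩)⁻¹) := by group
      _ = (σ n ⟨i+1, h⟩ * σ n ⟨i, by omega⟩ * σ n ⟨i+1, h⟩) *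
          ((σ n ⟨i+1, h⟩)⁻¹ * (σ n ⟨i, by omega⟩)⁻¹ * (σ n ⟨i, by omega⟩)⁻¹) := by rw [hb]
      _ = σ n ⟨i+1, h⟩ * (σ n ⟨i, by omega⟩)⁻¹ := by group
  rw [key]
  exact Subgroup.commutator_mem_commutator (Subgroup.mem_top _) (Subgroup.mem_top _)

lemma rho_succ_mem (i : ℕ) (h : i + 1 < n-1) :
    ρ n ⟨i+1, h⟩ * (ρ n ⟨i, by omega⟩)⁻¹ ∈ commutator (SG n) := by
  have hb : ρ n ⟨i, by omega⟩ * σ n ⟨i+1, h⟩ * σ n ⟨i, by omega⟩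
      = σ n ⟨i+1, h⟩ * σ n ⟨i, by omega⟩ * ρ n ⟨i+1, h⟩ :=
    mix1 ⟨i, by omega⟩ ⟨i+1, h⟩ rfl
  have key : ρ n ⟨i+1, h⟩ * (ρ n ⟨i, by omega⟩)⁻¹
      = ⁅(σ n ⟨i+1, h⟩ * σ n ⟨i, by omega⟩)⁻¹, ρ n ⟨i, by omega⟩⁆ := by
    rw [commutatorElement_def]
    symm
    calc (σ n ⟨i+1, h⟩ * σ n ⟨i, by omega⟩)⁻¹ * ρ n ⟨i, by omega⟩ *
          ((σ n ⟨i+1, h⟩ * σ n ⟨i, by omega⟩)⁻¹)⁻¹ * (ρ n ⟨i, by omega⟩)⁻¹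
        = (σ n ⟨i+1, h⟩ * σ n ⟨i, by omega⟩)⁻¹ *
          (ρ n ⟨i, by omega⟩ * σ n ⟨i+1, h⟩ * σ n ⟨i, by omega⟩) * (ρ n ⟨i, by omega⟩)⁻¹ := by
            group
      _ = (σ n ⟨i+1, h⟩ * σ n ⟨i, by omega⟩)⁻¹ *
          (σ n ⟨i+1, h⟩ * σ n ⟨i, by omega⟩ * ρ n ⟨i+1, h⟩) * (ρ n ⟨i, by omega⟩)⁻¹ := by
            rw [hb]
      _ = ρ n ⟨i+1, h⟩ * (ρ n ⟨i, by omega⟩)⁻¹ := by group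
  rw [key]
  exact Subgroup.commutator_mem_commutator (Subgroup.mem_top _) (Subgroup.mem_top _)

lemma sigma_mem_comm (i : ℕ) :
    ∀ h : i < n-1, σ n ⟨i, h⟩ * (σ n ⟨0, by omega⟩)⁻¹ ∈ commutator (SG n) := by
  induction i with
  | zero =>
      intro h
      show σ n ⟨0, h⟩ * (σ n ⟨0, h⟩)⁻¹ ∈ commutator (SG n)
      rw [mul_inv_cancel]
      exact one_mem _
  | succ k ih =>
      intro h
      have h1 : σ n ⟨k+1, h⟩ * (σ n ⟨0, by omega⟩)⁻¹ =
          (σ n ⟨k+1, h⟩ * (σ n ⟨k, by omega⟩)⁻¹) *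
          (σ n ⟨k, by omega⟩ * (σ n ⟨0, by omega⟩)⁻¹) := by group
      rw [h1]
      exact mul_mem (sigma_succ_mem k h) (ih (by omega))

lemma rho_mem_comm (i : ℕ) :
    ∀ h : i < n-1, ρ n ⟨i, h⟩ * (ρ n ⟨0, by omega⟩)⁻¹ ∈ commutator (SG n) := by
  induction i with
  | zero =>
      intro h
      show ρ n ⟨0, h⟩ * (ρ n ⟨0, h⟩)⁻¹ ∈ commutator (SG n)
      rw [mul_inv_cancel]
      exact one_mem _
  | succ k ih =>
      intro h
      have h1 : ρ n ⟨k+1, h⟩ * (ρ n ⟨0, by omega⟩)⁻¹ =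
          (ρ n ⟨k+1, h⟩ * (ρ n ⟨k, by omega⟩)⁻¹) *
          (ρ n ⟨k, by omega⟩ * (ρ n ⟨0, by omega⟩)⁻¹) := by group
      rw [h1]
      exact mul_mem (rho_succ_mem k h) (ih (by omega))

/-! ### The abelianization homomorphism. -/

lemma comm_aux1 {A : Type*} [CommGroup A] (x y : A) : x * y * x⁻¹ * y⁻¹ = 1 := by
  rw [mul_comm x y]; group

lemma comm_aux2 {A : Type*} [CommGroup A] (x y : A) : y * x * x * (x * x * y)⁻¹ = 1 := by
  rw [mul_comm (x*x) y]; group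

lemma phi_rels : ∀ r ∈ sgRels n, FreeGroup.lift
    (Sum.elim (fun _ : Fin (n-1) => Multiplicative.ofAdd ((1,0) : ℤ × ℤ))
              (fun _ : Fin (n-1) => Multiplicative.ofAdd ((0,1) : ℤ × ℤ))) r = 1 := by
  intro r hr
  simp only [sgRels, Set.mem_union, Set.mem_setOf_eq] at hr
  obtain (((((⟨i,j,hc,rfl⟩ | ⟨i,j,hc,rfl⟩) | ⟨i,j,hc,rfl⟩) |
      ⟨i,j,hc,rfl⟩) | ⟨i,j,hc,rfl⟩) | ⟨i,j,hc,rfl⟩) := hr <;>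
    simp only [σw, ρw, map_mul, map_inv, FreeGroup.lift_apply_of, Sum.elim_inl, Sum.elim_inr]
  · exact comm_aux1 _ _
  · group
  · exact comm_aux1 _ _
  · exact comm_aux2 _ _
  · exact comm_aux2 _ _
  · exact comm_aux1 _ _

/-- The abelianization homomorphism `SG n →* ℤ × ℤ`. -/
def phi (n : ℕ) : SG n →* Multiplicative (ℤ × ℤ) :=
  PresentedGroup.toGroup (phi_rels (n := n))

lemma phi_sigma (i : Fin (n-1)) : phi n (σ n i) = Multiplicative.ofAdd ((1,0) : ℤ × ℤ) :=
  PresentedGroup.toGroup.of (phi_rels (n := n))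

lemma phi_rho (i : Fin (n-1)) : phi n (ρ n i) = Multiplicative.ofAdd ((0,1) : ℤ × ℤ) :=
  PresentedGroup.toGroup.of (phi_rels (n := n))

lemma comm_le_ker : commutator (SG n) ≤ (phi n).ker := by
  rw [commutator_def]
  refine Subgroup.commutator_le.mpr fun g₁ _ g₂ _ => ?_
  rw [MonoidHom.mem_ker, map_commutatorElement]
  exact commutatorElement_eq_one_iff_mul_comm.mpr (mul_comm _ _)

end Rels

/-! ### Part 2 : the commutator subgroup is contained in the closure. -/

/-- The generating set. -/
def Sset (m : ℕ) (hm : 4 < m) : Set (SG m) :=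
  ({ σ m ⟨1, by omega⟩ * (σ m ⟨0, by omega⟩)⁻¹,
          σ m ⟨0, by omega⟩ * σ m ⟨1, by omega⟩ * (σ m ⟨0, by omega⟩)⁻¹ *
            (σ m ⟨0, by omega⟩)⁻¹ } : Set (SG m)) ∪
        {x : SG m | ∃ j : Fin (m-1), 2 ≤ (j : ℕ) ∧
          (x = σ m j * (σ m ⟨0, by omega⟩)⁻¹ ∨
           x = ρ m j * (ρ m ⟨0, by omega⟩)⁻¹)}

/-- The subgroup generated by that set. -/
abbrev Hgrp (m : ℕ) (hm : 5 ≤ m) : Subgroup (SG m) := Subgroup.closure (Sset m hm)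

section Main
variable {n : ℕ} (hn : 4 < n)

section Letters

local notation "s" => σ n ⟨0, by omega⟩
local notation "t" => σ n ⟨1, by omega⟩
local notation "p" => ρ n ⟨0, by omega⟩
local notation "q" => ρ n ⟨1, by omega⟩
local notation "m" => ρ n ⟨3, by omega⟩
local notation "H" => Hgrp n hn

include hn

lemma a_mem : t * (s)⁻¹ ∈ H :=
  Subgroup.subset_closure (Or.inl (Set.mem_insert _ _))

lemma b_mem : s * t * (s)⁻¹ * (s)⁻¹ ∈ H :=
  Subgroup.subset_closure (Or.inl (Set.mem_insert_of_mem _ rfl))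

lemma alpha_mem (j : Fin (n-1)) (hj : 2 ≤ (j:ℕ)) : σ n j * (s)⁻¹ ∈ H :=
  Subgroup.subset_closure (Or.inr ⟨j, hj, Or.inl rfl⟩)

lemma beta_mem (j : Fin (n-1)) (hj : 2 ≤ (j:ℕ)) : ρ n j * (p)⁻¹ ∈ H :=
  Subgroup.subset_closure (Or.inr ⟨j, hj, Or.inr rfl⟩)

lemma c_sp : Commute (σ n ⟨0, by omega⟩) (ρ n ⟨0, by omega⟩) :=
  sigma_rho_comm _ _ (Or.inl rfl)

lemma c_tm : Commute (σ n ⟨1, by omega⟩) (ρ n ⟨3, by omega⟩) :=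
  sigma_rho_comm _ _ (Or.inr (Or.inl (by show (1:ℕ)+1 < 3; omega)))

lemma c_sm : Commute (σ n ⟨0, by omega⟩) (ρ n ⟨3, by omega⟩) :=
  sigma_rho_comm _ _ (Or.inr (Or.inl (by show (0:ℕ)+1 < 3; omega)))

lemma c_pm : Commute (ρ n ⟨0, by omega⟩) (ρ n ⟨3, by omega⟩) :=
  rho_comm _ _ (Or.inl (by show (0:ℕ)+1 < 3; omega))

omit hn in
lemma conj_of_commute {u w : SG n} (h : Commute u w) : u * w * u⁻¹ = w := by
  rw [h.eq]; group

omit hn in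
lemma conj_inv_of_commute {u w : SG n} (h : Commute u w) : u⁻¹ * w * u = w := by
  rw [h.inv_left.eq]; group

/-- Conjugation by `ρ₁` of an element commuting with `ρ₄`. -/
lemma p_conj_eq {w : SG n} (h : Commute (ρ n ⟨3, by omega⟩) w) :
    p * w * (p)⁻¹ = (m * (p)⁻¹)⁻¹ * w * (m * (p)⁻¹) := by
  calc p * w * (p)⁻¹ = p * ((m)⁻¹ * w * m) * (p)⁻¹ := by
        rw [conj_inv_of_commute h]
    _ = (m * (p)⁻¹)⁻¹ * w * (m * (p)⁻¹) := by group

lemma p_inv_conj_eq {w : SG n} (h : Commute (ρ n ⟨3, by omega⟩) w) :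
    (p)⁻¹ * w * p = (m * (p)⁻¹) * w * (m * (p)⁻¹)⁻¹ := by
  have hpm : (p:SG n)⁻¹ * m = m * (p)⁻¹ := (c_pm hn).inv_left.eq
  have hmp : (m:SG n)⁻¹ * p = p * (m)⁻¹ := ((c_pm hn).symm).inv_left.eq
  calc (p)⁻¹ * w * p = (p)⁻¹ * (m * w * (m)⁻¹) * p := by
        rw [conj_of_commute h]
    _ = ((p)⁻¹ * m) * w * ((m)⁻¹ * p) := by group
    _ = (m * (p)⁻¹) * w * (p * (m)⁻¹) := by rw [hpm, hmp]
    _ = (m * (p)⁻¹) * w * (m * (p)⁻¹)⁻¹ := by group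

lemma mem_cases {x : SG n} (hx : x ∈ Sset n hn) :
    (x = t * (s)⁻¹) ∨ (x = s * t * (s)⁻¹ * (s)⁻¹) ∨
    (∃ j : Fin (n-1), 2 ≤ (j:ℕ) ∧ (x = σ n j * (s)⁻¹ ∨ x = ρ n j * (p)⁻¹)) := by
  simp only [Sset, Set.mem_union, Set.mem_insert_iff, Set.mem_singleton_iff,
    Set.mem_setOf_eq] at hx
  rcases hx with (h | h) | h
  · exact Or.inl h
  · exact Or.inr (Or.inl h)
  · exact Or.inr (Or.inr h)

lemma commute_s_alpha (j : Fin (n-1)) (hj : 2 ≤ (j:ℕ)) :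
    Commute (σ n ⟨0, by omega⟩) (σ n j * (σ n ⟨0, by omega⟩)⁻¹) := by
  have h1 : Commute (σ n ⟨0, by omega⟩) (σ n j) :=
    sigma_comm _ _ (Or.inl (by show (0:ℕ)+1 < (j:ℕ); omega))
  exact h1.mul_right (Commute.refl _).inv_right

lemma commute_s_beta (j : Fin (n-1)) (hj : 2 ≤ (j:ℕ)) :
    Commute (σ n ⟨0, by omega⟩) (ρ n j * (ρ n ⟨0, by omega⟩)⁻¹) := by
  have h1 : Commute (σ n ⟨0, by omega⟩) (ρ n j) :=
    sigma_rho_comm _ _ (Or.inr (Or.inl (by show (0:ℕ)+1 < (j:ℕ); omega)))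
  exact h1.mul_right (c_sp hn).inv_right

lemma commute_p_alpha (j : Fin (n-1)) (hj : 2 ≤ (j:ℕ)) :
    Commute (ρ n ⟨0, by omega⟩) (σ n j * (σ n ⟨0, by omega⟩)⁻¹) := by
  have h1 : Commute (σ n j) (ρ n ⟨0, by omega⟩) :=
    sigma_rho_comm _ _ (Or.inr (Or.inr (by show (0:ℕ)+1 < (j:ℕ); omega)))
  exact h1.symm.mul_right ((c_sp hn).symm).inv_right

lemma commute_p_beta (j : Fin (n-1)) (hj : 2 ≤ (j:ℕ)) :
    Commute (ρ n ⟨0, by omega⟩) (ρ n j * (ρ n ⟨0, by omega⟩)⁻¹) := by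
  have h1 : Commute (ρ n ⟨0, by omega⟩) (ρ n j) :=
    rho_comm _ _ (Or.inl (by show (0:ℕ)+1 < (j:ℕ); omega))
  exact h1.mul_right (Commute.refl _).inv_right

lemma conj_s_mem : ∀ g ∈ H, s * g * (s)⁻¹ ∈ H := by
  intro g hg
  induction hg using Subgroup.closure_induction with
  | mem x hx =>
      rcases mem_cases hn hx with h | h | ⟨j, hj, h | h⟩
      · subst h
        have he : s * (t * (s)⁻¹) * (s)⁻¹ = s * t * (s)⁻¹ * (s)⁻¹ := by group
        rw [he]; exact b_mem hn
      · subst h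
        have hb : s * t * s = t * s * t := braid_rel _ _ rfl
        have he : s * (s * t * (s)⁻¹ * (s)⁻¹) * (s)⁻¹
            = (t * (s)⁻¹)⁻¹ * (s * t * (s)⁻¹ * (s)⁻¹) := by
          calc s * (s * t * (s)⁻¹ * (s)⁻¹) * (s)⁻¹
              = s * (t)⁻¹ * (t * s * t) * ((s)⁻¹ * (s)⁻¹ * (s)⁻¹) := by group
            _ = s * (t)⁻¹ * (s * t * s) * ((s)⁻¹ * (s)⁻¹ * (s)⁻¹) := by rw [← hb]
            _ = (t * (s)⁻¹)⁻¹ * (s * t * (s)⁻¹ * (s)⁻¹) := by group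
        rw [he]
        exact mul_mem (inv_mem (a_mem hn)) (b_mem hn)
      · subst h
        rw [conj_of_commute (commute_s_alpha hn j hj)]
        exact alpha_mem hn j hj
      · subst h
        rw [conj_of_commute (commute_s_beta hn j hj)]
        exact beta_mem hn j hj
  | one => simpa using one_mem H
  | mul x y hx hy ihx ihy =>
      have he : s * (x * y) * (s)⁻¹ = (s * x * (s)⁻¹) * (s * y * (s)⁻¹) := by group
      rw [he]; exact mul_mem ihx ihy
  | inv x hx ihx =>
      have he : s * x⁻¹ * (s)⁻¹ = (s * x * (s)⁻¹)⁻¹ := by group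
      rw [he]; exact inv_mem ihx

lemma conj_sinv_mem : ∀ g ∈ H, (s)⁻¹ * g * s ∈ H := by
  intro g hg
  induction hg using Subgroup.closure_induction with
  | mem x hx =>
      rcases mem_cases hn hx with h | h | ⟨j, hj, h | h⟩
      · subst h
        have hb : s * t * s = t * s * t := braid_rel _ _ rfl
        have he : (s)⁻¹ * (t * (s)⁻¹) * s
            = (t * (s)⁻¹) * (s * t * (s)⁻¹ * (s)⁻¹)⁻¹ := by
          calc (s)⁻¹ * (t * (s)⁻¹) * s
              = (s)⁻¹ * (t * s * t) * ((t)⁻¹ * (s)⁻¹) := by group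
            _ = (s)⁻¹ * (s * t * s) * ((t)⁻¹ * (s)⁻¹) := by rw [← hb]
            _ = (t * (s)⁻¹) * (s * t * (s)⁻¹ * (s)⁻¹)⁻¹ := by group
        rw [he]
        exact mul_mem (a_mem hn) (inv_mem (b_mem hn))
      · subst h
        have he : (s)⁻¹ * (s * t * (s)⁻¹ * (s)⁻¹) * s = t * (s)⁻¹ := by group
        rw [he]; exact a_mem hn
      · subst h
        rw [conj_inv_of_commute (commute_s_alpha hn j hj)]
        exact alpha_mem hn j hj
      · subst h
        rw [conj_inv_of_commute (commute_s_beta hn j hj)]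
        exact beta_mem hn j hj
  | one => simpa using one_mem H
  | mul x y hx hy ihx ihy =>
      have he : (s)⁻¹ * (x * y) * s = ((s)⁻¹ * x * s) * ((s)⁻¹ * y * s) := by group
      rw [he]; exact mul_mem ihx ihy
  | inv x hx ihx =>
      have he : (s)⁻¹ * x⁻¹ * s = ((s)⁻¹ * x * s)⁻¹ := by group
      rw [he]; exact inv_mem ihx

lemma commute_m_a : Commute (ρ n ⟨3, by omega⟩)
    (σ n ⟨1, by omega⟩ * (σ n ⟨0, by omega⟩)⁻¹) :=
  ((c_tm hn).symm).mul_right (((c_sm hn).symm).inv_right)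

lemma commute_m_b : Commute (ρ n ⟨3, by omega⟩)
    (σ n ⟨0, by omega⟩ * σ n ⟨1, by omega⟩ * (σ n ⟨0, by omega⟩)⁻¹ * (σ n ⟨0, by omega⟩)⁻¹) :=
  (((((c_sm hn).symm).mul_right ((c_tm hn).symm)).mul_right
    (((c_sm hn).symm).inv_right)).mul_right (((c_sm hn).symm).inv_right))

lemma conj_p_mem : ∀ g ∈ H, p * g * (p)⁻¹ ∈ H := by
  intro g hg
  induction hg using Subgroup.closure_induction with
  | mem x hx =>
      have hβ : m * (p)⁻¹ ∈ H := beta_mem hn ⟨3, by omega⟩ (by show (2:ℕ) ≤ 3; omega)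
      rcases mem_cases hn hx with h | h | ⟨j, hj, h | h⟩
      · subst h
        rw [p_conj_eq hn (commute_m_a hn)]
        exact mul_mem (mul_mem (inv_mem hβ) (a_mem hn)) hβ
      · subst h
        rw [p_conj_eq hn (commute_m_b hn)]
        exact mul_mem (mul_mem (inv_mem hβ) (b_mem hn)) hβ
      · subst h
        rw [conj_of_commute (commute_p_alpha hn j hj)]
        exact alpha_mem hn j hj
      · subst h
        rw [conj_of_commute (commute_p_beta hn j hj)]
        exact beta_mem hn j hj
  | one => simpa using one_mem H
  | mul x y hx hy ihx ihy =>
      have he : p * (x * y) * (p)⁻¹ = (p * x * (p)⁻¹) * (p * y * (p)⁻¹) := by group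
      rw [he]; exact mul_mem ihx ihy
  | inv x hx ihx =>
      have he : p * x⁻¹ * (p)⁻¹ = (p * x * (p)⁻¹)⁻¹ := by group
      rw [he]; exact inv_mem ihx

lemma conj_pinv_mem : ∀ g ∈ H, (p)⁻¹ * g * p ∈ H := by
  intro g hg
  induction hg using Subgroup.closure_induction with
  | mem x hx =>
      have hβ : m * (p)⁻¹ ∈ H := beta_mem hn ⟨3, by omega⟩ (by show (2:ℕ) ≤ 3; omega)
      rcases mem_cases hn hx with h | h | ⟨j, hj, h | h⟩
      · subst h
        rw [p_inv_conj_eq hn (commute_m_a hn)]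
        exact mul_mem (mul_mem hβ (a_mem hn)) (inv_mem hβ)
      · subst h
        rw [p_inv_conj_eq hn (commute_m_b hn)]
        exact mul_mem (mul_mem hβ (b_mem hn)) (inv_mem hβ)
      · subst h
        rw [conj_inv_of_commute (commute_p_alpha hn j hj)]
        exact alpha_mem hn j hj
      · subst h
        rw [conj_inv_of_commute (commute_p_beta hn j hj)]
        exact beta_mem hn j hj
  | one => simpa using one_mem H
  | mul x y hx hy ihx ihy =>
      have he : (p)⁻¹ * (x * y) * p = ((p)⁻¹ * x * p) * ((p)⁻¹ * y * p) := by group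
      rw [he]; exact mul_mem ihx ihy
  | inv x hx ihx =>
      have he : (p)⁻¹ * x⁻¹ * p = ((p)⁻¹ * x * p)⁻¹ := by group
      rw [he]; exact inv_mem ihx

/-- The key identity : `ρ₂ρ₁⁻¹ = σ₁⁻²(α₂⁻¹ β₄⁻¹ α₂ β₄)σ₁²`. -/
lemma c_key_identity :
    q * (p)⁻¹ = (s)⁻¹ * ((s)⁻¹ *
      ((t * (s)⁻¹)⁻¹ * ((m * (p)⁻¹)⁻¹ * (t * (s)⁻¹) * (m * (p)⁻¹))) * s) * s := by
  have hmix : p * t * s = t * s * q := mix1 _ _ rfl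
  have h1 : (m:SG n)⁻¹ * t = t * (m)⁻¹ := ((c_tm hn).inv_right.eq).symm
  have h2 : (s:SG n)⁻¹ * m = m * (s)⁻¹ := (c_sm hn).inv_left.eq
  have h3 : (p:SG n)⁻¹ * s = s * (p)⁻¹ := ((c_sp hn).inv_right.eq).symm
  symm
  calc (s)⁻¹ * ((s)⁻¹ *
      ((t * (s)⁻¹)⁻¹ * ((m * (p)⁻¹)⁻¹ * (t * (s)⁻¹) * (m * (p)⁻¹))) * s) * s
      = (s)⁻¹ * (t)⁻¹ * (p * ((m)⁻¹ * t) * ((s)⁻¹ * m) * (p)⁻¹) * (s * s) := by group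
    _ = (s)⁻¹ * (t)⁻¹ * (p * (t * (m)⁻¹) * (m * (s)⁻¹) * (p)⁻¹) * (s * s) := by
        rw [h1, h2]
    _ = (s)⁻¹ * (t)⁻¹ * (p * t * s) * ((s)⁻¹ * (s)⁻¹ * ((p)⁻¹ * s) * s) := by group
    _ = (s)⁻¹ * (t)⁻¹ * (t * s * q) * ((s)⁻¹ * (s)⁻¹ * (s * (p)⁻¹) * s) := by
        rw [hmix, h3]
    _ = q * ((s)⁻¹ * ((p)⁻¹ * s)) := by group
    _ = q * ((s)⁻¹ * (s * (p)⁻¹)) := by rw [h3]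
    _ = q * (p)⁻¹ := by group

lemma c_mem : q * (p)⁻¹ ∈ H := by
  have hβ : m * (p)⁻¹ ∈ H := beta_mem hn ⟨3, by omega⟩ (by show (2:ℕ) ≤ 3; omega)
  have hW : (t * (s)⁻¹)⁻¹ * ((m * (p)⁻¹)⁻¹ * (t * (s)⁻¹) * (m * (p)⁻¹)) ∈ H :=
    mul_mem (inv_mem (a_mem hn))
      (mul_mem (mul_mem (inv_mem hβ) (a_mem hn)) hβ)
  have h1 := conj_sinv_mem hn _ hW
  have h2 := conj_sinv_mem hn _ h1
  rw [c_key_identity hn]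
  exact h2

lemma conj_s_zpow : ∀ k : ℤ, ∀ g ∈ H, (s)^k * g * ((s)^k)⁻¹ ∈ H := by
  intro k
  induction k using Int.induction_on with
  | zero => intro g hg; simpa using hg
  | succ i ih =>
      intro g hg
      have heq : (s)^((i:ℤ)+1) * g * ((s)^((i:ℤ)+1))⁻¹
          = (s)^(i:ℤ) * (s * g * (s)⁻¹) * ((s)^(i:ℤ))⁻¹ := by
        rw [zpow_add_one]; group
      rw [heq]
      exact ih _ (conj_s_mem hn g hg)
  | pred i ih =>
      intro g hg
      have heq : (s)^(-(i:ℤ)-1) * g * ((s)^(-(i:ℤ)-1))⁻¹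
          = (s)^(-(i:ℤ)) * ((s)⁻¹ * g * s) * ((s)^(-(i:ℤ)))⁻¹ := by
        rw [zpow_sub_one]; group
      rw [heq]
      exact ih _ (conj_sinv_mem hn g hg)

lemma conj_p_zpow : ∀ k : ℤ, ∀ g ∈ H, (p)^k * g * ((p)^k)⁻¹ ∈ H := by
  intro k
  induction k using Int.induction_on with
  | zero => intro g hg; simpa using hg
  | succ i ih =>
      intro g hg
      have heq : (p)^((i:ℤ)+1) * g * ((p)^((i:ℤ)+1))⁻¹
          = (p)^(i:ℤ) * (p * g * (p)⁻¹) * ((p)^(i:ℤ))⁻¹ := by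
        rw [zpow_add_one]; group
      rw [heq]
      exact ih _ (conj_p_mem hn g hg)
  | pred i ih =>
      intro g hg
      have heq : (p)^(-(i:ℤ)-1) * g * ((p)^(-(i:ℤ)-1))⁻¹
          = (p)^(-(i:ℤ)) * ((p)⁻¹ * g * p) * ((p)^(-(i:ℤ)))⁻¹ := by
        rw [zpow_sub_one]; group
      rw [heq]
      exact ih _ (conj_pinv_mem hn g hg)

lemma conj_sp_zpow (a b : ℤ) (g : SG n) (hg : g ∈ H) :
    ((s)^a * (p)^b) * g * ((s)^a * (p)^b)⁻¹ ∈ H := by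
  have h1 := conj_p_zpow hn b g hg
  have h2 := conj_s_zpow hn a _ h1
  have heq : ((s)^a * (p)^b) * g * ((s)^a * (p)^b)⁻¹
      = (s)^a * ((p)^b * g * ((p)^b)⁻¹) * ((s)^a)⁻¹ := by group
  rw [heq]; exact h2

end Letters
end Main

/-- The subgroup `K = H ⋅ ⟨σ₁⟩ ⋅ ⟨ρ₁⟩ `. -/
def Kgrp (m : ℕ) (hm : 4 < m) : Subgroup (SG m) where
  carrier := {g : SG m | ∃ h ∈ Hgrp m hm, ∃ a b : ℤ,
    g = h * (σ m ⟨0, by omega⟩)^a * (ρ m ⟨0, by omega⟩)^b}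
  one_mem' := ⟨1, one_mem _, 0, 0, by simp⟩
  mul_mem' := by
    rintro x y ⟨h₁, hh₁, a₁, b₁, rfl⟩ ⟨h₂, hh₂, a₂, b₂, rfl⟩
    refine ⟨h₁ * (((σ m ⟨0, by omega⟩)^a₁ * (ρ m ⟨0, by omega⟩)^b₁) * h₂ *
      ((σ m ⟨0, by omega⟩)^a₁ * (ρ m ⟨0, by omega⟩)^b₁)⁻¹), ?_, a₁+a₂, b₁+b₂, ?_⟩
    · exact mul_mem hh₁ (conj_sp_zpow hm a₁ b₁ h₂ hh₂)
    · have hc : (ρ m ⟨0, by omega⟩)^b₁ * (σ m ⟨0, by omega⟩)^a₂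
          = (σ m ⟨0, by omega⟩)^a₂ * (ρ m ⟨0, by omega⟩)^b₁ :=
        (((c_sp hm).symm).zpow_zpow b₁ a₂).eq
      calc h₁ * (σ m ⟨0, by omega⟩)^a₁ * (ρ m ⟨0, by omega⟩)^b₁ *
            (h₂ * (σ m ⟨0, by omega⟩)^a₂ * (ρ m ⟨0, by omega⟩)^b₂)
          = h₁ * (((σ m ⟨0, by omega⟩)^a₁ * (ρ m ⟨0, by omega⟩)^b₁) * h₂ *
              ((σ m ⟨0, by omega⟩)^a₁ * (ρ m ⟨0, by omega⟩)^b₁)⁻¹) *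
            ((σ m ⟨0, by omega⟩)^a₁ * ((ρ m ⟨0, by omega⟩)^b₁ * (σ m ⟨0, by omega⟩)^a₂) *
              (ρ m ⟨0, by omega⟩)^(-b₁) * (ρ m ⟨0, by omega⟩)^b₁ *
              (ρ m ⟨0, by omega⟩)^b₂) := by group
        _ = h₁ * (((σ m ⟨0, by omega⟩)^a₁ * (ρ m ⟨0, by omega⟩)^b₁) * h₂ *
              ((σ m ⟨0, by omega⟩)^a₁ * (ρ m ⟨0, by omega⟩)^b₁)⁻¹) *
            ((σ m ⟨0, by omega⟩)^a₁ * ((σ m ⟨0, by omega⟩)^a₂ * (ρ m ⟨0, by omega⟩)^b₁) *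
              (ρ m ⟨0, by omega⟩)^(-b₁) * (ρ m ⟨0, by omega⟩)^b₁ *
              (ρ m ⟨0, by omega⟩)^b₂) := by rw [hc]
        _ = h₁ * (((σ m ⟨0, by omega⟩)^a₁ * (ρ m ⟨0, by omega⟩)^b₁) * h₂ *
              ((σ m ⟨0, by omega⟩)^a₁ * (ρ m ⟨0, by omega⟩)^b₁)⁻¹) *
            (σ m ⟨0, by omega⟩)^(a₁+a₂) * (ρ m ⟨0, by omega⟩)^(b₁+b₂) := by
              rw [zpow_add (σ m ⟨0, by omega⟩), zpow_add (ρ m ⟨0, by omega⟩)]; group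
  inv_mem' := by
    rintro x ⟨h, hh, a, b, rfl⟩
    refine ⟨((σ m ⟨0, by omega⟩)^(-a) * (ρ m ⟨0, by omega⟩)^(-b)) * h⁻¹ *
      ((σ m ⟨0, by omega⟩)^(-a) * (ρ m ⟨0, by omega⟩)^(-b))⁻¹,
      conj_sp_zpow hm (-a) (-b) h⁻¹ (inv_mem hh), -a, -b, ?_⟩
    have hc : (ρ m ⟨0, by omega⟩)^(-b) * (σ m ⟨0, by omega⟩)^(-a)
        = (σ m ⟨0, by omega⟩)^(-a) * (ρ m ⟨0, by omega⟩)^(-b) :=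
      (((c_sp hm).symm).zpow_zpow (-b) (-a)).eq
    calc (h * (σ m ⟨0, by omega⟩)^a * (ρ m ⟨0, by omega⟩)^b)⁻¹
        = (ρ m ⟨0, by omega⟩)^(-b) * (σ m ⟨0, by omega⟩)^(-a) * h⁻¹ := by group
      _ = ((σ m ⟨0, by omega⟩)^(-a) * (ρ m ⟨0, by omega⟩)^(-b)) * h⁻¹ := by rw [hc]
      _ = ((σ m ⟨0, by omega⟩)^(-a) * (ρ m ⟨0, by omega⟩)^(-b)) * h⁻¹ *
          ((σ m ⟨0, by omega⟩)^(-a) * (ρ m ⟨0, by omega⟩)^(-b))⁻¹ *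
          (σ m ⟨0, by omega⟩)^(-a) * (ρ m ⟨0, by omega⟩)^(-b) := by group

lemma gens_in_K (m : ℕ) (hm : 4 < m) : ∀ x : Fin (m-1) ⊕ Fin (m-1),
    (PresentedGroup.of x : SG m) ∈ Kgrp m hm := by
  rintro (i | i)
  · obtain ⟨(_ | _ | v), hv⟩ := i
    · refine ⟨1, one_mem _, 1, 0, ?_⟩
      rw [zpow_one, zpow_zero, one_mul, mul_one]
      rfl
    · refine ⟨σ m ⟨1, hv⟩ * (σ m ⟨0, by omega⟩)⁻¹, a_mem hm, 1, 0, ?_⟩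
      rw [zpow_one, zpow_zero, mul_one]
      exact (inv_mul_cancel_right _ _).symm
    · refine ⟨σ m ⟨v+2, hv⟩ * (σ m ⟨0, by omega⟩)⁻¹,
        alpha_mem hm ⟨v+2, hv⟩ (by show (2:ℕ) ≤ v+2; omega), 1, 0, ?_⟩
      rw [zpow_one, zpow_zero, mul_one]
      exact (inv_mul_cancel_right _ _).symm
  · obtain ⟨(_ | _ | v), hv⟩ := i
    · refine ⟨1, one_mem _, 0, 1, ?_⟩
      rw [zpow_one, zpow_zero, one_mul, one_mul]
      rfl
    · refine ⟨ρ m ⟨1, hv⟩ * (ρ m ⟨0, by omega⟩)⁻¹, c_mem hm, 0, 1, ?_⟩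
      rw [zpow_one, zpow_zero, mul_one]
      exact (inv_mul_cancel_right _ _).symm
    · refine ⟨ρ m ⟨v+2, hv⟩ * (ρ m ⟨0, by omega⟩)⁻¹,
        beta_mem hm ⟨v+2, hv⟩ (by show (2:ℕ) ≤ v+2; omega), 0, 1, ?_⟩
      rw [zpow_one, zpow_zero, mul_one]
      exact (inv_mul_cancel_right _ _).symm

end SGProof

open SingBraid in
/-- For `n ≥ 5`, the commutator subgroup of `SG_n` is generated by the `2n - 4` elements
`α_{0,0,2} = σ₂σ₁⁻¹`, `α_{1,0,2} = σ₁σ₂σ₁⁻²`, and, for `3 ≤ j ≤ n-1` (so `2 ≤ (j:ℕ)` in the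
0-indexed convention), `α_j = σ_jσ₁⁻¹` and `β_{0,j} = ρ_jρ₁⁻¹`. -/
theorem sg_commutator_eq_closure_explicit (n : ℕ) (hn : 5 ≤ n) :
    Subgroup.closure
      (({ σ n ⟨1, by omega⟩ * (σ n ⟨0, by omega⟩)⁻¹,
          σ n ⟨0, by omega⟩ * σ n ⟨1, by omega⟩ * (σ n ⟨0, by omega⟩)⁻¹ *
            (σ n ⟨0, by omega⟩)⁻¹ } : Set (SG n)) ∪
        {x : SG n | ∃ j : Fin (n-1), 2 ≤ (j : ℕ) ∧
          (x = σ n j * (σ n ⟨0, by omega⟩)⁻¹ ∨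
           x = ρ n j * (ρ n ⟨0, by omega⟩)⁻¹)})
      = commutator (SG n) := by
  have hset : (({ σ n ⟨1, by omega⟩ * (σ n ⟨0, by omega⟩)⁻¹,
          σ n ⟨0, by omega⟩ * σ n ⟨1, by omega⟩ * (σ n ⟨0, by omega⟩)⁻¹ *
            (σ n ⟨0, by omega⟩)⁻¹ } : Set (SG n)) ∪
        {x : SG n | ∃ j : Fin (n-1), 2 ≤ (j : ℕ) ∧
          (x = σ n j * (σ n ⟨0, by omega⟩)⁻¹ ∨
           x = ρ n j * (ρ n ⟨0, by omega⟩)⁻¹)}) = SGProof.Sset n hn := rfl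
  rw [hset]
  apply le_antisymm
  · -- closure ≤ commutator
    rw [Subgroup.closure_le]
    intro x hx
    rcases SGProof.mem_cases hn hx with h | h | ⟨j, hj, h | h⟩
    · subst h
      exact SGProof.sigma_mem_comm 1 (by omega)
    · subst h
      have ha : σ n ⟨1, by omega⟩ * (σ n ⟨0, by omega⟩)⁻¹ ∈ commutator (SG n) :=
        SGProof.sigma_mem_comm 1 (by omega)
      have hb := (inferInstance : (commutator (SG n)).Normal).conj_mem _ ha
        (σ n ⟨0, by omega⟩)
      have he : σ n ⟨0, by omega⟩ * (σ n ⟨1, by omega⟩ * (σ n ⟨0, by omega⟩)⁻¹) *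
          (σ n ⟨0, by omega⟩)⁻¹
          = σ n ⟨0, by omega⟩ * σ n ⟨1, by omega⟩ * (σ n ⟨0, by omega⟩)⁻¹ *
            (σ n ⟨0, by omega⟩)⁻¹ := by group
      rw [he] at hb
      exact hb
    · subst h
      exact SGProof.sigma_mem_comm (j:ℕ) j.isLt
    · subst h
      exact SGProof.rho_mem_comm (j:ℕ) j.isLt
  · -- commutator ≤ closure
    intro g hg
    obtain ⟨h, hh, a, b, hgeq⟩ :=
      PresentedGroup.generated_by (sgRels n) (SGProof.Kgrp n hn) (SGProof.gens_in_K n hn) g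
    have hph : SGProof.phi n h = 1 :=
      SGProof.comm_le_ker
        ((Subgroup.closure_le (commutator (SG n))).mpr
          (by
            intro x hx
            rcases SGProof.mem_cases hn hx with h' | h' | ⟨j, hj, h' | h'⟩
            · subst h'; exact SGProof.sigma_mem_comm 1 (by omega)
            · subst h'
              have ha : σ n ⟨1, by omega⟩ * (σ n ⟨0, by omega⟩)⁻¹ ∈ commutator (SG n) :=
                SGProof.sigma_mem_comm 1 (by omega)
              have hb := (inferInstance : (commutator (SG n)).Normal).conj_mem _ ha
                (σ n ⟨0, by omega⟩)
              have he : σ n ⟨0, by omega⟩ * (σ n ⟨1, by omega⟩ * (σ n ⟨0, by omega⟩)⁻¹) *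
                  (σ n ⟨0, by omega⟩)⁻¹
                  = σ n ⟨0, by omega⟩ * σ n ⟨1, by omega⟩ * (σ n ⟨0, by omega⟩)⁻¹ *
                    (σ n ⟨0, by omega⟩)⁻¹ := by group
              rw [he] at hb
              exact hb
            · subst h'; exact SGProof.sigma_mem_comm (j:ℕ) j.isLt
            · subst h'; exact SGProof.rho_mem_comm (j:ℕ) j.isLt) hh)
    have h1 : SGProof.phi n g = 1 := SGProof.comm_le_ker hg
    rw [hgeq, map_mul, map_mul, map_zpow, map_zpow, hph, one_mul,
      SGProof.phi_sigma, SGProof.phi_rho] at h1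
    have h2 := congrArg Multiplicative.toAdd h1
    simp only [toAdd_mul, toAdd_zpow, toAdd_ofAdd, toAdd_one, Prod.smul_mk, smul_eq_mul,
      mul_one, mul_zero, Prod.mk_add_mk, add_zero, zero_add, Prod.mk_eq_zero] at h2
    obtain ⟨rfl, rfl⟩ := h2
    rw [hgeq]
    simpa using hh
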